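/- Let N, M ≥ 1, S ≥ 1, let Q⁰, Q¹, …, Q^S ∈ ℝ^{N×M}, and let B ⊆ ℝ^S be a nonempty compact convex set. Define Q(ξ) = Q⁰ + Σ_{s=1}^S ξ_s Q^s, and assume that for every ξ ∈ B the matrix Q(ξ) is row-stochastic with strictly positive entries. Let φ(ξ,p) = I(p, Q(ξ)). Then the minimax equality holds: sup_{p ∈ Δ_N} inf_{ξ ∈ B} φ(ξ,p) = inf_{ξ ∈ B} sup_{p ∈ Δ_N} φ(ξ,p). -/

import Mathlib

open Real

/-- Average mutual information `I(p,Q)`. -/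
noncomputable def AMI {N M : ℕ} (p : Fin N → ℝ) (Q : Fin N → Fin M → ℝ) : ℝ :=
  ∑ n, ∑ m, p n * Q n m * Real.log (Q n m / ∑ l, p l * Q l m)

/-- `Q` is row-stochastic with strictly positive entries. -/
def rowStochPos {N M : ℕ} (Q : Fin N → Fin M → ℝ) : Prop :=
  (∀ n m, 0 < Q n m) ∧ ∀ n, ∑ m, Q n m = 1

lemma comb_pos {t s x y : ℝ} (ht : 0 ≤ t) (hs : 0 ≤ s) (hts : t + s = 1)
    (hx : 0 < x) (hy : 0 < y) : 0 < t * x + s * y := by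
  rcases ht.lt_or_eq with h | h
  · have h1 : 0 < t * x := mul_pos h hx
    have h2 : 0 ≤ s * y := mul_nonneg hs hy.le
    linarith
  · have : s = 1 := by linarith
    simp [← h, this, hy]


/-- two-point log-sum inequality -/
lemma logsum_two {a₁ a₂ b₁ b₂ t s : ℝ} (ha₁ : 0 < a₁) (ha₂ : 0 < a₂)
    (hb₁ : 0 < b₁) (hb₂ : 0 < b₂) (ht : 0 ≤ t) (hs : 0 ≤ s) (hts : t + s = 1) :
    (t * a₁ + s * a₂) * Real.log ((t * a₁ + s * a₂) / (t * b₁ + s * b₂)) ≤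
      t * (a₁ * Real.log (a₁ / b₁)) + s * (a₂ * Real.log (a₂ / b₂)) := by
  have hB : 0 < t * b₁ + s * b₂ := comb_pos ht hs hts hb₁ hb₂
  set Bv := t * b₁ + s * b₂ with hBv
  have hw₁ : 0 ≤ t * b₁ / Bv := by positivity
  have hw₂ : 0 ≤ s * b₂ / Bv := by positivity
  have hwsum : t * b₁ / Bv + s * b₂ / Bv = 1 := by
    field_simp
    exact hBv.symm
  have key := Real.convexOn_mul_log.2 (Set.mem_Ici.2 (by positivity : (0:ℝ) ≤ a₁ / b₁))
    (Set.mem_Ici.2 (by positivity : (0:ℝ) ≤ a₂ / b₂)) hw₁ hw₂ hwsum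
  simp only [smul_eq_mul] at key
  have e1 : t * b₁ / Bv * (a₁ / b₁) + s * b₂ / Bv * (a₂ / b₂) = (t * a₁ + s * a₂) / Bv := by
    field_simp
  rw [e1] at key
  have e2 : t * b₁ / Bv * (a₁ / b₁ * Real.log (a₁ / b₁)) = (t * (a₁ * Real.log (a₁/b₁))) / Bv := by
    field_simp
  have e3 : s * b₂ / Bv * (a₂ / b₂ * Real.log (a₂ / b₂)) = (s * (a₂ * Real.log (a₂/b₂))) / Bv := by
    field_simp
  rw [e2, e3, ← add_div] at key
  have h5 := mul_le_mul_of_nonneg_right key hB.le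
  have e4 : (t * a₁ + s * a₂) / Bv * Real.log ((t * a₁ + s * a₂) / Bv) * Bv
      = (t * a₁ + s * a₂) * Real.log ((t * a₁ + s * a₂) / Bv) := by
    field_simp
  have e5 : (t * (a₁ * Real.log (a₁/b₁)) + s * (a₂ * Real.log (a₂/b₂))) / Bv * Bv
      = t * (a₁ * Real.log (a₁/b₁)) + s * (a₂ * Real.log (a₂/b₂)) := by
    field_simp
  rw [e4, e5] at h5
  exact h5

/-- Gibbs' inequality -/
lemma gibbs {M : ℕ} (a b : Fin M → ℝ) (ha : ∀ m, 0 < a m) (hb : ∀ m, 0 < b m)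
    (hab : ∑ m, a m = ∑ m, b m) : 0 ≤ ∑ m, a m * Real.log (a m / b m) := by
  have h : ∀ m, a m - b m ≤ a m * Real.log (a m / b m) := by
    intro m
    have hl : Real.log (b m / a m) ≤ b m / a m - 1 :=
      Real.log_le_sub_one_of_pos (div_pos (hb m) (ha m))
    have hlog : Real.log (a m / b m) = - Real.log (b m / a m) := by
      rw [← Real.log_inv]; congr 1; field_simp
    have h2 : a m * Real.log (b m / a m) ≤ a m * (b m / a m - 1) :=
      mul_le_mul_of_nonneg_left hl (ha m).le
    have h3 : a m * (b m / a m) = b m := by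
      rw [mul_comm (a m) (b m / a m), div_mul_cancel₀ _ (ha m).ne']
    rw [hlog]
    nlinarith [h2, h3]
  have := Finset.sum_le_sum (fun m (_ : m ∈ Finset.univ) => h m)
  rw [Finset.sum_sub_distrib, hab] at this
  linarith


lemma comb_lt {t s x y c : ℝ} (ht : 0 ≤ t) (hs : 0 ≤ s) (hts : t + s = 1)
    (hx : x < c) (hy : y < c) : t * x + s * y < c := by
  rcases ht.lt_or_eq with h | h
  · have h1 : t * x < t * c := mul_lt_mul_of_pos_left hx h
    have h2 : s * y ≤ s * c := mul_le_mul_of_nonneg_left hy.le hs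
    have h3 : t * c + s * c = c := by rw [← add_mul, hts, one_mul]
    linarith
  · have : s = 1 := by linarith
    simp [← h, this, hy]

lemma simplex_sep {N : ℕ} (hN : 0 < N) {E : Type*} [AddCommGroup E] [Module ℝ E]
    {Y : Set E} (hYne : Y.Nonempty) (hY : Convex ℝ Y) (g : Fin N → E → ℝ)
    (hg : ∀ n, ConvexOn ℝ Y (g n)) (c : ℝ) (hc : ∀ y ∈ Y, ∃ n, c ≤ g n y) :
    ∃ μ ∈ stdSimplex ℝ (Fin N), ∀ y ∈ Y, c ≤ ∑ n, μ n * g n y := by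
  haveI : Nonempty (Fin N) := ⟨⟨0, hN⟩⟩
  obtain ⟨y₀, hy₀⟩ := hYne
  set A : Set (Fin N → ℝ) := {z | ∃ y ∈ Y, ∀ n, g n y ≤ z n} with hA
  set O : Set (Fin N → ℝ) := {z | ∀ n, z n < c} with hO
  have hO_open : IsOpen O := by
    have : O = ⋂ n, ((fun z : Fin N → ℝ => z n) ⁻¹' Set.Iio c) := by
      ext z; simp [hO, Set.mem_iInter]
    rw [this]
    exact isOpen_iInter_of_finite fun n => (continuous_apply n).isOpen_preimage _ isOpen_Iio
  have hO_conv : Convex ℝ O := by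
    intro z₁ h₁ z₂ h₂ t s ht hs hts
    intro n
    simp only [Pi.add_apply, Pi.smul_apply, smul_eq_mul]
    exact comb_lt ht hs hts (h₁ n) (h₂ n)
  have hA_conv : Convex ℝ A := by
    rintro z₁ ⟨y₁, hy₁, h₁⟩ z₂ ⟨y₂, hy₂, h₂⟩ t s ht hs hts
    refine ⟨t • y₁ + s • y₂, hY hy₁ hy₂ ht hs hts, fun n => ?_⟩
    have h := (hg n).2 hy₁ hy₂ ht hs hts
    simp only [smul_eq_mul] at h
    simp only [Pi.add_apply, Pi.smul_apply, smul_eq_mul]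
    have := add_le_add (mul_le_mul_of_nonneg_left (h₁ n) ht)
      (mul_le_mul_of_nonneg_left (h₂ n) hs)
    linarith
  have disj : Disjoint O A := by
    rw [Set.disjoint_left]
    rintro z hzO ⟨y, hy, hle⟩
    obtain ⟨n, hn⟩ := hc y hy
    exact absurd (hzO n) (not_lt.2 (hn.trans (hle n)))
  obtain ⟨f, u, hfO, hfA⟩ := geometric_hahn_banach_open hO_conv hO_open hA_conv disj
  set lam : Fin N → ℝ := fun n => f (fun j => if n = j then 1 else 0) with hlam
  have hfz : ∀ z : Fin N → ℝ, f z = ∑ n, z n * lam n := by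
    intro z
    conv_lhs => rw [pi_eq_sum_univ z]
    rw [map_sum]
    exact Finset.sum_congr rfl fun n _ => by rw [map_smul]; simp [hlam, smul_eq_mul]
  set b₀ : Fin N → ℝ := fun n => g n y₀ with hb₀
  have hb₀A : b₀ ∈ A := ⟨y₀, hy₀, fun n => le_refl _⟩
  have hfb : u ≤ f b₀ := hfA _ hb₀A
  have hnonneg : ∀ n, 0 ≤ lam n := by
    intro n
    by_contra h
    push_neg at h
    set t : ℝ := (u - f b₀) / lam n + 1 with hT
    have ht0 : 0 ≤ t := by
      have h4 : 0 ≤ -(u - f b₀) / -(lam n) :=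
        div_nonneg (by linarith) (by linarith)
      rw [neg_div_neg_eq] at h4
      rw [hT]
      linarith
    set zt : Fin N → ℝ := b₀ + t • (fun j => if n = j then (1:ℝ) else 0) with hzt
    have hztA : zt ∈ A := by
      refine ⟨y₀, hy₀, fun k => ?_⟩
      simp only [hzt, Pi.add_apply, Pi.smul_apply, smul_eq_mul]
      have : 0 ≤ t * (if n = k then (1:ℝ) else 0) := by
        split <;> simp [ht0]
      have hk : g k y₀ ≤ b₀ k := le_refl _
      linarith
    have hfzt : f zt = f b₀ + t * lam n := by
      simp only [hzt, map_add, map_smul, smul_eq_mul, hlam]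
    have htl : t * lam n = (u - f b₀) + lam n := by
      rw [hT, add_mul, div_mul_cancel₀ _ (ne_of_lt h), one_mul]
    have := hfA _ hztA
    rw [hfzt, htl] at this
    linarith
  have hsum0 : 0 ≤ ∑ n, lam n := Finset.sum_nonneg fun n _ => hnonneg n
  have hsum : 0 < ∑ n, lam n := by
    rcases hsum0.lt_or_eq with h | h
    · exact h
    · exfalso
      have hall : ∀ n ∈ Finset.univ, lam n = 0 :=
        (Finset.sum_eq_zero_iff_of_nonneg fun n _ => hnonneg n).1 h.symm
      have hzero : ∀ z : Fin N → ℝ, f z = 0 := fun z => by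
        rw [hfz]; exact Finset.sum_eq_zero fun n hn => by rw [hall n hn, mul_zero]
      have h1 := hfO (fun _ : Fin N => c - 1) (fun n => by simp)
      rw [hzero] at h1
      rw [hzero] at hfb
      linarith
  have hcu : c * (∑ n, lam n) ≤ u := by
    by_contra h
    push_neg at h
    set ε : ℝ := (c * (∑ n, lam n) - u) / (2 * ∑ n, lam n) with hε
    have hε0 : 0 < ε := by
      apply div_pos (by linarith) (by linarith)
    have hzO : (fun _ : Fin N => c - ε) ∈ O := fun n => by simp [hε0]
    have h1 := hfO _ hzO
    rw [hfz] at h1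
    have e : ∑ n, (c - ε) * lam n = (c - ε) * ∑ n, lam n := by
      rw [Finset.mul_sum]
    rw [e] at h1
    have eε : ε * ∑ n, lam n = (c * (∑ n, lam n) - u) / 2 := by
      rw [hε]; field_simp
    nlinarith
  refine ⟨fun n => lam n / ∑ k, lam k, ⟨fun n => div_nonneg (hnonneg n) hsum.le,
    by rw [← Finset.sum_div, div_self hsum.ne']⟩, ?_⟩
  intro y hy
  have hb : u ≤ f (fun n => g n y) := hfA _ ⟨y, hy, fun n => le_refl _⟩
  rw [hfz] at hb
  have e : ∑ n, lam n / (∑ k, lam k) * g n y = (∑ n, g n y * lam n) / ∑ k, lam k := by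
    rw [Finset.sum_div]
    exact Finset.sum_congr rfl fun n _ => by ring
  rw [e, le_div_iff₀ hsum]
  linarith

theorem minimax_equality_perturbed_channel
    {N M S : ℕ} (hN : 0 < N) (hM : 0 < M) (hS : 0 < S)
    (Q0 : Fin N → Fin M → ℝ) (Qs : Fin S → Fin N → Fin M → ℝ)
    (B : Set (Fin S → ℝ)) (hBne : B.Nonempty) (hBcomp : IsCompact B)
    (hBconv : Convex ℝ B)
    (Qmap : (Fin S → ℝ) → (Fin N → Fin M → ℝ))
    (hQmap : Qmap = fun ξ => fun n m => Q0 n m + ∑ s, ξ s * Qs s n m)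
    (hpos : ∀ ξ ∈ B, rowStochPos (Qmap ξ))
    (φ : (Fin S → ℝ) → (Fin N → ℝ) → ℝ)
    (hφ : φ = fun ξ p => AMI p (Qmap ξ)) :
    sSup { x | ∃ p ∈ stdSimplex ℝ (Fin N), x = sInf { y | ∃ ξ ∈ B, y = φ ξ p } } =
      sInf { y | ∃ ξ ∈ B, y = sSup { x | ∃ p ∈ stdSimplex ℝ (Fin N), x = φ ξ p } } := by
  classical
  haveI : Nonempty (Fin N) := ⟨⟨0, hN⟩⟩
  obtain ⟨ξ₀, hξ₀⟩ := hBne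
  have Qpos : ∀ ξ ∈ B, ∀ n m, 0 < Qmap ξ n m := fun ξ h => (hpos ξ h).1
  have Qsum : ∀ ξ ∈ B, ∀ n, ∑ m, Qmap ξ n m = 1 := fun ξ h => (hpos ξ h).2
  set Δ := stdSimplex ℝ (Fin N) with hΔ
  -- the uniform distribution on inputs and outputs
  set p₀ : Fin N → ℝ := fun _ => (N : ℝ)⁻¹ with hp₀
  have hp₀Δ : p₀ ∈ Δ := by
    constructor
    · intro n; show (0:ℝ) ≤ (N:ℝ)⁻¹; positivity
    · simp only [hp₀, Finset.sum_const, Finset.card_univ, Fintype.card_fin, nsmul_eq_mul]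
      rw [mul_inv_cancel₀ (by exact_mod_cast hN.ne' : (N:ℝ) ≠ 0)]
  set qu : Fin M → ℝ := fun _ => (M : ℝ)⁻¹ with hqu
  have hqupos : ∀ m, 0 < qu m := fun m => by show (0:ℝ) < (M:ℝ)⁻¹; positivity
  have hqusum : ∑ m, qu m = 1 := by
    simp only [hqu, Finset.sum_const, Finset.card_univ, Fintype.card_fin, nsmul_eq_mul]
    rw [mul_inv_cancel₀ (by exact_mod_cast hM.ne' : (M:ℝ) ≠ 0)]
  -- output distribution induced by p
  set r : (Fin S → ℝ) → (Fin N → ℝ) → Fin M → ℝ :=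
    fun ξ p m => ∑ l, p l * Qmap ξ l m with hrdef
  have hex : ∀ p ∈ Δ, ∃ l, 0 < p l := by
    intro p hp
    by_contra h
    push_neg at h
    have : ∑ l, p l = 0 := Finset.sum_eq_zero fun l _ => le_antisymm (h l) (hp.1 l)
    rw [hp.2] at this
    norm_num at this
  have hr_pos : ∀ ξ ∈ B, ∀ p ∈ Δ, ∀ m, 0 < r ξ p m := by
    intro ξ hξ p hp m
    obtain ⟨l, hl⟩ := hex p hp
    exact Finset.sum_pos' (fun l' _ => mul_nonneg (hp.1 l') (Qpos ξ hξ l' m).le)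
      ⟨l, Finset.mem_univ l, mul_pos hl (Qpos ξ hξ l m)⟩
  have hr_sum : ∀ ξ ∈ B, ∀ p ∈ Δ, ∑ m, r ξ p m = 1 := by
    intro ξ hξ p hp
    rw [hrdef]
    rw [Finset.sum_comm]
    calc ∑ l, ∑ m, p l * Qmap ξ l m = ∑ l, p l * ∑ m, Qmap ξ l m := by
          exact Finset.sum_congr rfl fun l _ => (Finset.mul_sum _ _ _).symm
      _ = ∑ l, p l := Finset.sum_congr rfl fun l _ => by rw [Qsum ξ hξ l, mul_one]
      _ = 1 := hp.2
  -- the convex functions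
  set g : Fin N → (Fin S → ℝ) × (Fin M → ℝ) → ℝ :=
    fun n y => ∑ m, Qmap y.1 n m * Real.log (Qmap y.1 n m / y.2 m) with hgdef
  -- identity : φ ξ p = ∑ₙ pₙ gₙ(ξ, r ξ p)
  have hφ_eq : ∀ ξ, ∀ p : Fin N → ℝ, φ ξ p = ∑ n, p n * g n (ξ, r ξ p) := by
    intro ξ p
    simp only [hφ, AMI, hgdef, hrdef, Finset.mul_sum, mul_assoc]
  -- inequality : φ ξ p ≤ ∑ₙ pₙ gₙ(ξ, q) для all output distrib q
  have hφ_le : ∀ ξ ∈ B, ∀ p ∈ Δ, ∀ q : Fin M → ℝ, (∀ m, 0 < q m) → (∑ m, q m = 1) →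
      φ ξ p ≤ ∑ n, p n * g n (ξ, q) := by
    intro ξ hξ p hp q hqpos hqsum
    have e1 : ∀ n, g n (ξ, q) - g n (ξ, r ξ p)
        = ∑ m, Qmap ξ n m * (Real.log (r ξ p m) - Real.log (q m)) := by
      intro n
      rw [hgdef]
      simp only
      rw [← Finset.sum_sub_distrib]
      refine Finset.sum_congr rfl fun m _ => ?_
      rw [Real.log_div (Qpos ξ hξ n m).ne' (hqpos m).ne',
        Real.log_div (Qpos ξ hξ n m).ne' (hr_pos ξ hξ p hp m).ne']
      ring
    have e2 : ∑ n, p n * g n (ξ, q) - ∑ n, p n * g n (ξ, r ξ p)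
        = ∑ m, r ξ p m * Real.log (r ξ p m / q m) := by
      rw [← Finset.sum_sub_distrib]
      calc ∑ n, (p n * g n (ξ, q) - p n * g n (ξ, r ξ p))
          = ∑ n, p n * (g n (ξ, q) - g n (ξ, r ξ p)) := by
            exact Finset.sum_congr rfl fun n _ => by ring
        _ = ∑ n, ∑ m, p n * (Qmap ξ n m * (Real.log (r ξ p m) - Real.log (q m))) := by
            exact Finset.sum_congr rfl fun n _ => by rw [e1 n, Finset.mul_sum]
        _ = ∑ m, ∑ n, p n * (Qmap ξ n m * (Real.log (r ξ p m) - Real.log (q m))) :=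
            Finset.sum_comm
        _ = ∑ m, (∑ n, p n * Qmap ξ n m) * (Real.log (r ξ p m) - Real.log (q m)) := by
            refine Finset.sum_congr rfl fun m _ => ?_
            rw [Finset.sum_mul]
            exact Finset.sum_congr rfl fun n _ => by ring
        _ = ∑ m, r ξ p m * Real.log (r ξ p m / q m) := by
            refine Finset.sum_congr rfl fun m _ => ?_
            rw [Real.log_div (hr_pos ξ hξ p hp m).ne' (hqpos m).ne', hrdef]
    have e3 : 0 ≤ ∑ m, r ξ p m * Real.log (r ξ p m / q m) :=
      gibbs _ _ (hr_pos ξ hξ p hp) hqpos (by rw [hr_sum ξ hξ p hp, hqsum])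
    rw [hφ_eq ξ p]
    linarith
  -- nonnegativity of φ
  have hφ_nonneg : ∀ ξ ∈ B, ∀ p ∈ Δ, 0 ≤ φ ξ p := by
    intro ξ hξ p hp
    rw [hφ_eq ξ p]
    refine Finset.sum_nonneg fun n _ => mul_nonneg (hp.1 n) ?_
    exact gibbs _ _ (fun m => Qpos ξ hξ n m) (hr_pos ξ hξ p hp)
      (by rw [Qsum ξ hξ n, hr_sum ξ hξ p hp])
  -- weighted sums over the simplex are bounded by max
  have hsum_le : ∀ p ∈ Δ, ∀ v : Fin N → ℝ, ∀ K : ℝ, (∀ n, v n ≤ K) →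
      ∑ n, p n * v n ≤ K := by
    intro p hp v K hv
    calc ∑ n, p n * v n ≤ ∑ n, p n * K :=
          Finset.sum_le_sum fun n _ => mul_le_mul_of_nonneg_left (hv n) (hp.1 n)
      _ = K := by rw [← Finset.sum_mul, hp.2, one_mul]
  -- upper bound for φ ξ · uniform in p
  have hφ_ub : ∀ ξ ∈ B, ∀ p ∈ Δ, φ ξ p ≤
      Finset.univ.sup' Finset.univ_nonempty (fun n => g n (ξ, qu)) := by
    intro ξ hξ p hp
    refine (hφ_le ξ hξ p hp qu hqupos hqusum).trans ?_
    exact hsum_le p hp _ _ fun n => Finset.le_sup' (f := fun n => g n (ξ, qu)) (Finset.mem_univ n)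
  -- bddness of the inner sets
  have hTbdd : ∀ p ∈ Δ, BddBelow {y | ∃ ξ ∈ B, y = φ ξ p} := by
    intro p hp
    exact ⟨0, by rintro y ⟨ξ, hξ, rfl⟩; exact hφ_nonneg ξ hξ p hp⟩
  have hUbdd : ∀ ξ ∈ B, BddAbove {x | ∃ p ∈ Δ, x = φ ξ p} := by
    intro ξ hξ
    exact ⟨_, by rintro x ⟨p, hp, rfl⟩; exact hφ_ub ξ hξ p hp⟩
  have hS₁ne : {x | ∃ p ∈ Δ, x = sInf {y | ∃ ξ ∈ B, y = φ ξ p}}.Nonempty :=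
    ⟨_, p₀, hp₀Δ, rfl⟩
  have hS₂ne : {y | ∃ ξ ∈ B, y = sSup {x | ∃ p ∈ Δ, x = φ ξ p}}.Nonempty :=
    ⟨_, ξ₀, hξ₀, rfl⟩
  have hS₁bdd : BddAbove {x | ∃ p ∈ Δ, x = sInf {y | ∃ ξ ∈ B, y = φ ξ p}} := by
    refine ⟨Finset.univ.sup' Finset.univ_nonempty (fun n => g n (ξ₀, qu)), ?_⟩
    rintro x ⟨p, hp, rfl⟩
    exact (csInf_le (hTbdd p hp) ⟨ξ₀, hξ₀, rfl⟩).trans (hφ_ub ξ₀ hξ₀ p hp)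
  have hS₂bdd : BddBelow {y | ∃ ξ ∈ B, y = sSup {x | ∃ p ∈ Δ, x = φ ξ p}} := by
    refine ⟨0, ?_⟩
    rintro y ⟨ξ, hξ, rfl⟩
    exact (hφ_nonneg ξ hξ p₀ hp₀Δ).trans (le_csSup (hUbdd ξ hξ) ⟨p₀, hp₀Δ, rfl⟩)
  refine le_antisymm ?_ ?_
  · -- easy direction
    refine csSup_le hS₁ne ?_
    rintro x ⟨p, hp, rfl⟩
    refine le_csInf hS₂ne ?_
    rintro y ⟨ξ, hξ, rfl⟩
    exact (csInf_le (hTbdd p hp) ⟨ξ, hξ, rfl⟩).trans (le_csSup (hUbdd ξ hξ) ⟨p, hp, rfl⟩)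
  · -- hard direction
    set c := sInf {y | ∃ ξ ∈ B, y = sSup {x | ∃ p ∈ Δ, x = φ ξ p}} with hcdef
    set Y : Set ((Fin S → ℝ) × (Fin M → ℝ)) :=
      {y | y.1 ∈ B ∧ (∀ m, 0 < y.2 m) ∧ ∑ m, y.2 m = 1} with hYdef
    have hYne : Y.Nonempty := ⟨(ξ₀, qu), hξ₀, hqupos, hqusum⟩
    have hYconv : Convex ℝ Y := by
      rintro ⟨ξ₁, q₁⟩ ⟨h1B, h1p, h1s⟩ ⟨ξ₂, q₂⟩ ⟨h2B, h2p, h2s⟩ t s ht hs hts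
      simp only [hYdef, Prod.smul_mk, Prod.mk_add_mk, Set.mem_setOf_eq]
      refine ⟨hBconv h1B h2B ht hs hts, fun m => ?_, ?_⟩
      · simp only [Pi.add_apply, Pi.smul_apply, smul_eq_mul]
        exact comb_pos ht hs hts (h1p m) (h2p m)
      · simp only [Pi.add_apply, Pi.smul_apply, smul_eq_mul]
        rw [Finset.sum_add_distrib, ← Finset.mul_sum, ← Finset.mul_sum, h1s, h2s]
        linarith
    -- affinity of Qmap
    have hQaff : ∀ (ξ₁ ξ₂ : Fin S → ℝ) (t s : ℝ), t + s = 1 → ∀ n m,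
        Qmap (t • ξ₁ + s • ξ₂) n m = t * Qmap ξ₁ n m + s * Qmap ξ₂ n m := by
      intro ξ₁ ξ₂ t s hts n m
      simp only [hQmap, Pi.add_apply, Pi.smul_apply, smul_eq_mul]
      have h1 : ∑ s', (t * ξ₁ s' + s * ξ₂ s') * Qs s' n m
          = t * (∑ s', ξ₁ s' * Qs s' n m) + s * (∑ s', ξ₂ s' * Qs s' n m) := by
        rw [Finset.mul_sum, Finset.mul_sum, ← Finset.sum_add_distrib]
        exact Finset.sum_congr rfl fun _ _ => by ring
      rw [h1]
      linear_combination (-(Q0 n m)) * hts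
    -- convexity of g n on Y
    have hgconv : ∀ n, ConvexOn ℝ Y (g n) := by
      intro n
      refine ⟨hYconv, ?_⟩
      rintro ⟨ξ₁, q₁⟩ ⟨h1B, h1p, _⟩ ⟨ξ₂, q₂⟩ ⟨h2B, h2p, _⟩ t s ht hs hts
      simp only [hgdef, Prod.smul_mk, Prod.mk_add_mk, smul_eq_mul]
      rw [Finset.mul_sum, Finset.mul_sum, ← Finset.sum_add_distrib]
      refine Finset.sum_le_sum fun m _ => ?_
      have hq : (t • q₁ + s • q₂) m = t * q₁ m + s * q₂ m := by
        simp [Pi.add_apply, Pi.smul_apply, smul_eq_mul]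
      rw [hQaff ξ₁ ξ₂ t s hts n m, hq]
      exact logsum_two (Qpos ξ₁ h1B n m) (Qpos ξ₂ h2B n m) (h1p m) (h2p m) ht hs hts
    -- c is dominated by the max of the g n on Y
    have hc : ∀ y ∈ Y, ∃ n, c ≤ g n y := by
      rintro ⟨ξ, q⟩ ⟨hξB, hqpos, hqsum⟩
      obtain ⟨n₀, _, hmax⟩ := Finset.exists_max_image Finset.univ
        (fun n => g n (ξ, q)) Finset.univ_nonempty
      refine ⟨n₀, ?_⟩
      have hsup : sSup {x | ∃ p ∈ Δ, x = φ ξ p} ≤ g n₀ (ξ, q) := by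
        refine csSup_le ⟨_, p₀, hp₀Δ, rfl⟩ ?_
        rintro x ⟨p, hp, rfl⟩
        refine (hφ_le ξ hξB p hp q hqpos hqsum).trans ?_
        exact hsum_le p hp _ _ fun n => hmax n (Finset.mem_univ n)
      exact (csInf_le hS₂bdd ⟨ξ, hξB, rfl⟩).trans hsup
    obtain ⟨μ, hμΔ, hμ⟩ := simplex_sep hN hYne hYconv g hgconv c hc
    have hkey : ∀ ξ ∈ B, c ≤ φ ξ μ := by
      intro ξ hξ
      have h := hμ (ξ, r ξ μ) ⟨hξ, hr_pos ξ hξ μ hμΔ, hr_sum ξ hξ μ hμΔ⟩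
      rw [hφ_eq ξ μ]
      exact h
    have h1 : c ≤ sInf {y | ∃ ξ ∈ B, y = φ ξ μ} := by
      refine le_csInf ⟨_, ξ₀, hξ₀, rfl⟩ ?_
      rintro y ⟨ξ, hξ, rfl⟩
      exact hkey ξ hξ
    exact h1.trans (le_csSup hS₁bdd ⟨μ, hμΔ, rfl⟩)
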